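/- arXiv:2202.00865 — 3 statements merged into one kernel-verified Lean document; each statement's English description precedes it below -/
import Mathlib

section
/- If H_j is potentially optimal with constant K > 0, then for every i with d_i σ_i < d_j σ_j we have K ≥ (f_{H_j} − f_{H_i})/(d_j σ_j − d_i σ_i), and for every i with d_i σ_i > d_j σ_j we have K ≤ (f_{H_i} − f_{H_j})/(d_i σ_i − d_j σ_j). Consequently max_{i: d_iσ_i < d_jσ_j} (f_{H_j} − f_{H_i})/(d_jσ_j − d_iσ_i) ≤ min_{i: d_iσ_i > d_jσ_j} (f_{H_i} − f_{H_j})/(d_iσ_i − d_jσ_j). -/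
/-- If `H_j` is potentially optimal with constant `K > 0`, then for every `i` with
`a i < a j` (where `a i = d_i σ_i`) we have `K ≥ (f_{H_j} − f_{H_i})/(a j − a i)`,
for every `i` with `a i > a j` we have `K ≤ (f_{H_i} − f_{H_j})/(a i − a j)`, and
consequently the max of the former slopes is at most the min of the latter ones. -/
theorem potentially_optimal_slope_bounds {I : Type*} [Fintype I]
    (fH a : I → ℝ) (ha : ∀ i, 0 < a i)
    (ε fmin fmed : ℝ) (hε : 0 < ε)
    (j : I) (K : ℝ) (hK : 0 < K)
    (h1 : ∀ i, fH j - K * a j ≤ fH i - K * a i)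
    (h2 : fH j - K * a j ≤ fmin - ε * |fmin - fmed|) :
    (∀ i, a i < a j → (fH j - fH i) / (a j - a i) ≤ K) ∧
    (∀ i, a j < a i → K ≤ (fH i - fH j) / (a i - a j)) ∧
    (∀ i₁ i₂, a i₁ < a j → a j < a i₂ →
      (fH j - fH i₁) / (a j - a i₁) ≤ (fH i₂ - fH j) / (a i₂ - a j)) := by
  have hlo : ∀ i, a i < a j → (fH j - fH i) / (a j - a i) ≤ K := by
    intro i hi
    rw [div_le_iff₀ (by linarith)]
    have := h1 i; nlinarith
  have hhi : ∀ i, a j < a i → K ≤ (fH i - fH j) / (a i - a j) := by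
    intro i hi
    rw [le_div_iff₀ (by linarith)]
    have := h1 i; nlinarith
  exact ⟨hlo, hhi, fun i₁ i₂ h₁ h₂ => le_trans (hlo i₁ h₁) (hhi i₂ h₂)⟩
end

section
/- Conversely, suppose (a) f_{H_j} ≤ f_{H_i} for all i with d_iσ_i = d_jσ_j; (b) max over i with d_iσ_i < d_jσ_j of g_i is ≤ min over i with d_iσ_i > d_jσ_j of g_i, where g_i = (f_{H_i} − f_{H_j})/(d_iσ_i − d_jσ_j); and (c) f_{H_j} ≤ d_jσ_j · min_{i: d_iσ_i > d_jσ_j} g_i + f_min − ε|f_min − f_median|. Then H_j is potentially optimal, i.e., there exists K > 0 satisfying both defining inequalities. -/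
open Finset in
/-- Converse direction of the characterization of potentially optimal
hyper-rectangles: conditions (a), (b), (c) imply the existence of a constant
`K > 0` realizing potential optimality.  Here `a i` stands for `d_i σ_i`,
`g i = (f_{H_i} − f_{H_j})/(a i − a j)`, and (per the context) the set
`{i : a i > a j}` is nonempty with strictly positive minimal `g`-value. -/
theorem potentially_optimal_of_conditions {I : Type*} [Fintype I] [DecidableEq I]
    (fH a : I → ℝ) (ha : ∀ i, 0 < a i)
    (ε fmin fmed : ℝ) (hε : 0 < ε)
    (j : I)
    (B : Finset I) (hBdef : B = Finset.univ.filter (fun i => a j < a i))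
    (hB : B.Nonempty)
    (g : I → ℝ) (hg : ∀ i, g i = (fH i - fH j) / (a i - a j))
    (hpos : 0 < B.inf' hB g)
    (hA : ∀ i, a i = a j → fH j ≤ fH i)
    (hb : ∀ i₁ i₂, a i₁ < a j → a j < a i₂ →
      (fH j - fH i₁) / (a j - a i₁) ≤ g i₂)
    (hc : fH j ≤ a j * B.inf' hB g + fmin - ε * |fmin - fmed|) :
    ∃ K > 0, (∀ i, fH j - K * a j ≤ fH i - K * a i) ∧
      fH j - K * a j ≤ fmin - ε * |fmin - fmed| := by
  set K := B.inf' hB g with hK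
  refine ⟨K, hpos, fun i => ?_, by linarith⟩
  rcases lt_trichotomy (a i) (a j) with h | h | h
  · -- a i < a j : (fH j - fH i)/(a j - a i) ≤ g i₂ for all i₂ ∈ B, so ≤ K
    have hKle : (fH j - fH i) / (a j - a i) ≤ K := by
      apply Finset.le_inf' hB
      intro i₂ hi₂
      have : a j < a i₂ := by
        rw [hBdef] at hi₂; simpa using hi₂
      exact hb i i₂ h this
    have hd : 0 < a j - a i := by linarith
    rw [div_le_iff₀ hd] at hKle
    nlinarith
  · -- equal
    have := hA i h
    rw [h]; linarith
  · -- a i > a j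
    have hiB : i ∈ B := by rw [hBdef]; simpa using h
    have hKle : K ≤ g i := Finset.inf'_le g hiB
    rw [hg i] at hKle
    have hd : 0 < a i - a j := by linarith
    rw [le_div_iff₀ hd] at hKle
    nlinarith
end

section
/- Suppose in an infinite process each step selects some element from a finite multiset of hyper-rectangles, and whenever a hyper-rectangle of maximal weight d_jσ_j is selected it is replaced by finitely many hyper-rectangles each of volume at most one third of its own, with weights σ bounded in [ε_σ, 1]. If the largest-diameter rectangles are selected infinitely often, then the minimum number of divisions l_t undergone by any hyper-rectangle at iteration t tends to infinity as t → ∞. -/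
/-- Abstract StepDIRECT division process, recorded via division counts: `c t` is the
multiset of division counts of the boxes at iteration `t`, and at each step the box
with count `m t` is replaced by a nonempty finite collection of boxes with strictly
larger division counts (each division multiplies volume by at most `1/3`).  If
boxes of minimal division count (equivalently, of largest diameter) are divided
infinitely often, then the minimum division count tends to infinity: no division
level survives forever. -/
theorem min_division_count_tendsto_top
    (c : ℕ → Multiset ℕ) (m : ℕ → ℕ)
    (hstep : ∀ t, m t ∈ c t ∧ ∃ D : Multiset ℕ, D ≠ 0 ∧ (∀ x ∈ D, m t < x) ∧
      c (t + 1) = (c t).erase (m t) + D)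
    (hmin : ∀ t, ∃ t' ≥ t, ∀ x ∈ c t', m t' ≤ x) :
    ∀ r : ℕ, ∃ T : ℕ, ∀ t ≥ T, ∀ x ∈ c t, r ≤ x := by
  intro r
  induction r with
  | zero => exact ⟨0, fun t _ x _ => Nat.zero_le x⟩
  | succ r ih =>
    obtain ⟨T, hT⟩ := ih
    have hstep' : ∀ t ≥ T, Multiset.count r (c (t+1)) ≤ Multiset.count r (c t) := by
      intro t ht
      obtain ⟨hm, D, hD0, hDgt, hc⟩ := hstep t
      rw [hc, Multiset.count_add]
      have hD : Multiset.count r D = 0 := Multiset.count_eq_zero.2 (fun hr => by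
        have h1 := hDgt r hr
        have h2 := hT t ht (m t) hm
        omega)
      rw [hD, Nat.add_zero]
      exact Multiset.count_le_of_le r (Multiset.erase_le _ _)
    have hmono : ∀ t ≥ T, ∀ k, Multiset.count r (c (t+k)) ≤ Multiset.count r (c t) := by
      intro t ht k
      induction k with
      | zero => exact le_refl _
      | succ k ihk => exact le_trans (hstep' (t+k) (by omega)) ihk
    have key : ∀ n, ∀ t ≥ T, Multiset.count r (c t) ≤ n →
        ∃ s ≥ t, Multiset.count r (c s) = 0 := by
      intro n
      induction n with
      | zero => exact fun t ht h => ⟨t, le_refl t, Nat.le_zero.1 h⟩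
      | succ n ihn =>
        intro t ht h
        obtain ⟨t', ht', hminim⟩ := hmin t
        have ht'T : t' ≥ T := le_trans ht ht'
        by_cases h0 : Multiset.count r (c t') = 0
        · exact ⟨t', ht', h0⟩
        · have hmem : r ∈ c t' := by
            rw [← Multiset.count_pos]; omega
          have hmr : m t' = r :=
            le_antisymm (hminim r hmem) (hT t' ht'T (m t') (hstep t').1)
          obtain ⟨hm, D, hD0, hDgt, hc⟩ := hstep t'
          have hD : Multiset.count r D = 0 := Multiset.count_eq_zero.2 (fun hr => by
            have h1 := hDgt r hr
            omega)
          have hcount : Multiset.count r (c (t'+1)) = Multiset.count r (c t') - 1 := by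
            rw [hc, Multiset.count_add, hD, Nat.add_zero, hmr, Multiset.count_erase_self]
          have hle : Multiset.count r (c t') ≤ n+1 := by
            have := hmono t ht (t' - t)
            rw [Nat.add_sub_cancel' ht'] at this
            omega
          obtain ⟨s, hs, hs0⟩ := ihn (t'+1) (by omega) (by omega)
          exact ⟨s, by omega, hs0⟩
    obtain ⟨s, hsT, hs0⟩ := key (Multiset.count r (c T)) T (le_refl T) (le_refl _)
    have hsT' : s ≥ T := hsT
    refine ⟨s, fun t ht x hx => ?_⟩
    have hxr : r ≤ x := hT t (le_trans hsT' ht) x hx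
    have hzero : Multiset.count r (c t) = 0 := by
      have := hmono s hsT' (t - s)
      rw [Nat.add_sub_cancel' ht] at this
      omega
    have hne : x ≠ r := fun hxe => by
      rw [Multiset.count_eq_zero] at hzero
      exact hzero (hxe ▸ hx)
    omega
end
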